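/- Let Ω ⊆ ℝⁿ be a nonempty measurable set, K an admissible kernel which in addition satisfies ‖K(x,·) − K(x',·)‖_{L¹(Ω)} ≤ L_K |x − x'| for all x, x' ∈ Ω, and let ρ be a recognition function satisfying the coordination condition. Let u₀ : Ω → ℝ be bounded and Lipschitz with constant L₀, let T < ∞, and let u be a solution of the initial value problem u_t = g[u] with initial datum u₀ on Ω × [0,T]. Then u is (jointly) Lipschitz continuous on Ω × [0,T]: there exists L, depending only on T, K, ρ and u₀, such that |u(x,t) − u(y,s)| ≤ L (|x − y| + |t − s|) for all x, y ∈ Ω and s, t ∈ [0,T]. -/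

import Mathlib

open MeasureTheory Set

/-- Joint space-time Lipschitz regularity for the coordination game.  Under the
hypotheses of the spatial regularity theorem (Lipschitz kernel in the `L¹` sense, coordination
condition, bounded Lipschitz initial datum), a solution `u` of the IVP on `Ω × [0,T]` with
`T < ∞` is jointly Lipschitz: there is `L` with
`|u(x,t) − u(y,s)| ≤ L (|x − y| + |t − s|)` for all `x, y ∈ Ω`, `s, t ∈ [0,T]`. -/
theorem statement7
    (n : ℕ) (Ω : Set (EuclideanSpace ℝ (Fin n)))
    (hΩne : Ω.Nonempty) (hΩmeas : MeasurableSet Ω)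
    -- `K` is an admissible kernel, Lipschitz in the first variable in the `L¹` sense:
    (K : EuclideanSpace ℝ (Fin n) → EuclideanSpace ℝ (Fin n) → ℝ)
    (hKnonneg : ∀ x y, 0 ≤ K x y)
    (hKmeas : Measurable (Function.uncurry K))
    (hKint : ∀ x ∈ Ω, IntegrableOn (K x) Ω)
    (hKcont : ∀ x ∈ Ω, ∀ ε > (0:ℝ), ∃ δ > (0:ℝ), ∀ x' ∈ Ω, dist x' x < δ →
        (∫ y in Ω, |K x' y - K x y|) < ε)
    (D : ℝ) (hD : ∀ x ∈ Ω, (∫ y in Ω, K x y) ≤ D)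
    (L_K : ℝ) (hKlip : ∀ x ∈ Ω, ∀ x' ∈ Ω, (∫ y in Ω, |K x y - K x' y|) ≤ L_K * dist x x')
    -- `ρ` is a recognition function satisfying the coordination condition:
    (ρ : ℝ → ℝ) (hρ : Differentiable ℝ ρ)
    (hρ'lip : ∀ R : ℝ, 0 < R → ∃ L : ℝ, ∀ a b : ℝ, |a| ≤ R → |b| ≤ R →
        |deriv ρ a - deriv ρ b| ≤ L * |a - b|)
    (hcoord_pos : ∀ z : ℝ, 0 ≤ z → deriv ρ z ≤ 0)
    (hcoord_neg : ∀ z : ℝ, z ≤ 0 → 0 ≤ deriv ρ z)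
    -- `u₀` bounded and Lipschitz with constant `L₀`:
    (u₀ : EuclideanSpace ℝ (Fin n) → ℝ)
    (L₀ : ℝ) (hu₀lip : ∀ x ∈ Ω, ∀ x' ∈ Ω, |u₀ x - u₀ x'| ≤ L₀ * dist x x')
    (M : ℝ) (hu₀bd : ∀ x ∈ Ω, |u₀ x| ≤ M)
    -- `u` solves the IVP on `Ω × [0,T]` with `T < ∞`:
    (T : ℝ) (hT : 0 < T)
    (u : EuclideanSpace ℝ (Fin n) → ℝ → ℝ)
    (hucont : ContinuousOn (fun p : EuclideanSpace ℝ (Fin n) × ℝ => u p.1 p.2) (Ω ×ˢ Icc 0 T))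
    (hubd : ∃ Mu : ℝ, ∀ x ∈ Ω, ∀ t ∈ Icc (0:ℝ) T, |u x t| ≤ Mu)
    (hueq : ∀ x ∈ Ω, ∀ t ∈ Icc (0:ℝ) T,
        u x t = u₀ x + ∫ s in (0:ℝ)..t, ∫ y in Ω, K x y * deriv ρ (u x s - u y s)) :
    ∃ L : ℝ, ∀ x ∈ Ω, ∀ y ∈ Ω, ∀ t ∈ Icc (0:ℝ) T, ∀ s ∈ Icc (0:ℝ) T,
      |u x t - u y s| ≤ L * (dist x y + |t - s|) := by
  classical
  obtain ⟨x₀, hx₀⟩ := hΩne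
  obtain ⟨Mu, hMu⟩ := hubd
  have h0T : (0:ℝ) ∈ Icc (0:ℝ) T := ⟨le_refl 0, hT.le⟩
  have hMu0 : 0 ≤ Mu := (abs_nonneg _).trans (hMu x₀ hx₀ 0 h0T)
  have hRpos : (0:ℝ) < 2 * Mu + 1 := by linarith
  obtain ⟨Lρ₀, hLρ₀⟩ := hρ'lip (2 * Mu + 1) hRpos
  set R : ℝ := 2 * Mu + 1 with hRdef
  set Lρ : ℝ := max Lρ₀ 0 with hLρdef
  have hLρ0 : 0 ≤ Lρ := le_max_right _ _
  have hρlip : ∀ a b : ℝ, |a| ≤ R → |b| ≤ R → |deriv ρ a - deriv ρ b| ≤ Lρ * |a - b| :=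
    fun a b ha hb =>
      (hLρ₀ a b ha hb).trans (mul_le_mul_of_nonneg_right (le_max_left _ _) (abs_nonneg _))
  set C : ℝ := |deriv ρ 0| + Lρ * R with hCdef
  have hC0 : 0 ≤ C := add_nonneg (abs_nonneg _) (mul_nonneg hLρ0 hRpos.le)
  have hC : ∀ z : ℝ, |z| ≤ R → |deriv ρ z| ≤ C := by
    intro z hz
    have h0 : |(0:ℝ)| ≤ R := by simpa using hRpos.le
    have h1 := hρlip z 0 hz h0
    have h2 : |deriv ρ z| - |deriv ρ 0| ≤ |deriv ρ z - deriv ρ 0| := abs_sub_abs_le_abs_sub _ _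
    have h3 : |z - 0| ≤ R := by simpa using hz
    have h4 : Lρ * |z - 0| ≤ Lρ * R := mul_le_mul_of_nonneg_left h3 hLρ0
    rw [hCdef]; linarith
  have hrange : ∀ x ∈ Ω, ∀ y ∈ Ω, ∀ t ∈ Icc (0:ℝ) T, |u x t - u y t| ≤ R := by
    intro x hx y hy t ht
    have h1 := hMu x hx t ht
    have h2 := hMu y hy t ht
    have h3 : |u x t - u y t| ≤ |u x t| + |u y t| := abs_sub _ _
    rw [hRdef]; linarith
  have hD0 : 0 ≤ D :=
    le_trans (integral_nonneg fun y => hKnonneg x₀ y) (hD x₀ hx₀)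
  set LK : ℝ := max L_K 0 with hLKdef
  have hLK0 : 0 ≤ LK := le_max_right _ _
  have hKlip' : ∀ x ∈ Ω, ∀ x' ∈ Ω, (∫ y in Ω, |K x y - K x' y|) ≤ LK * dist x x' :=
    fun x hx x' hx' =>
      (hKlip x hx x' hx').trans (mul_le_mul_of_nonneg_right (le_max_left _ _) dist_nonneg)
  set L₀' : ℝ := max L₀ 0 with hL₀def
  have hL₀0 : 0 ≤ L₀' := le_max_right _ _
  have hu₀lip' : ∀ x ∈ Ω, ∀ x' ∈ Ω, |u₀ x - u₀ x'| ≤ L₀' * dist x x' :=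
    fun x hx x' hx' =>
      (hu₀lip x hx x' hx').trans (mul_le_mul_of_nonneg_right (le_max_left _ _) dist_nonneg)
  clear_value R Lρ C LK L₀'
  -- measurability preliminaries
  have hmeasK : ∀ x, Measurable (K x) := fun x => hKmeas.of_uncurry_left
  have hmeasut : ∀ t ∈ Icc (0:ℝ) T, AEMeasurable (fun y => u y t) (volume.restrict Ω) := by
    intro t ht
    have hcont : ContinuousOn (fun y => u y t) Ω :=
      hucont.comp ((continuous_id.prodMk continuous_const).continuousOn)
        (fun y hy => ⟨hy, ht⟩)
    exact hcont.aemeasurable hΩmeas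
  have hmeasρ : ∀ x, ∀ t ∈ Icc (0:ℝ) T,
      AEMeasurable (fun y => deriv ρ (u x t - u y t)) (volume.restrict Ω) :=
    fun x t ht =>
      (measurable_deriv ρ).comp_aemeasurable (aemeasurable_const.sub (hmeasut t ht))
  have haeΩ : ∀ᵐ y ∂(volume.restrict Ω), y ∈ Ω := ae_restrict_mem hΩmeas
  have hbd1 : ∀ a ∈ Ω, ∀ b ∈ Ω, ∀ t ∈ Icc (0:ℝ) T, ∀ᵐ y ∂(volume.restrict Ω),
      ‖K a y * deriv ρ (u b t - u y t)‖ ≤ C * K a y := by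
    intro a ha b hb t ht
    filter_upwards [haeΩ] with y hy
    have h1 : |deriv ρ (u b t - u y t)| ≤ C := hC _ (hrange b hb y hy t ht)
    calc ‖K a y * deriv ρ (u b t - u y t)‖
        = K a y * |deriv ρ (u b t - u y t)| := by
          rw [Real.norm_eq_abs, abs_mul, abs_of_nonneg (hKnonneg a y)]
      _ ≤ K a y * C := mul_le_mul_of_nonneg_left h1 (hKnonneg a y)
      _ = C * K a y := mul_comm _ _
  have hint1 : ∀ a ∈ Ω, ∀ b ∈ Ω, ∀ t ∈ Icc (0:ℝ) T,
      Integrable (fun y => K a y * deriv ρ (u b t - u y t)) (volume.restrict Ω) := by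
    intro a ha b hb t ht
    refine Integrable.mono' ((hKint a ha).const_mul C) ?_ (hbd1 a ha b hb t ht)
    exact ((hmeasK a).aemeasurable.mul (hmeasρ b t ht)).aestronglyMeasurable
  -- bound on the nonlocality
  have hgbd : ∀ x ∈ Ω, ∀ t ∈ Icc (0:ℝ) T,
      ‖∫ y in Ω, K x y * deriv ρ (u x t - u y t)‖ ≤ C * D := by
    intro x hx t ht
    have h1 : ‖∫ y in Ω, K x y * deriv ρ (u x t - u y t)‖
        ≤ ∫ y in Ω, ‖K x y * deriv ρ (u x t - u y t)‖ := norm_integral_le_integral_norm _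
    have h2 : (∫ y in Ω, ‖K x y * deriv ρ (u x t - u y t)‖) ≤ ∫ y in Ω, C * K x y :=
      integral_mono_of_nonneg (Filter.Eventually.of_forall fun y => norm_nonneg _)
        ((hKint x hx).const_mul C) (hbd1 x hx x hx t ht)
    have h3 : (∫ y in Ω, C * K x y) = C * ∫ y in Ω, K x y := integral_const_mul _ _
    have h4 : C * (∫ y in Ω, K x y) ≤ C * D := mul_le_mul_of_nonneg_left (hD x hx) hC0
    linarith
  -- continuity in time, for fixed x
  have hcu : ∀ x ∈ Ω, ContinuousOn (fun t => u x t) (Icc (0:ℝ) T) := by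
    intro x hx
    exact hucont.comp ((continuous_const.prodMk continuous_id).continuousOn)
      (fun t ht => ⟨hx, ht⟩)
  have hρcont : ContinuousOn (deriv ρ) (Icc (-R) R) := by
    have hlip : LipschitzOnWith (Real.toNNReal Lρ) (deriv ρ) (Icc (-R) R) := by
      apply LipschitzOnWith.of_dist_le_mul
      intro a ha b hb
      rw [Real.dist_eq, Real.dist_eq]
      have h := hρlip a b (abs_le.mpr ⟨ha.1, ha.2⟩) (abs_le.mpr ⟨hb.1, hb.2⟩)
      simpa [Real.coe_toNNReal Lρ hLρ0] using h
    exact hlip.continuousOn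
  have hgcont : ∀ x ∈ Ω,
      ContinuousOn (fun t => ∫ y in Ω, K x y * deriv ρ (u x t - u y t)) (Icc (0:ℝ) T) := by
    intro x hx
    apply continuousOn_of_dominated (bound := fun y => C * K x y)
    · intro t ht; exact (hint1 x hx x hx t ht).aestronglyMeasurable
    · intro t ht; exact hbd1 x hx x hx t ht
    · exact (hKint x hx).const_mul C
    · filter_upwards [haeΩ] with y hy
      have h1 : ContinuousOn (fun t => u x t - u y t) (Icc (0:ℝ) T) :=
        (hcu x hx).sub (hcu y hy)
      have h2 : MapsTo (fun t => u x t - u y t) (Icc (0:ℝ) T) (Icc (-R) R) := fun t ht =>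
        mem_Icc.mpr (abs_le.mp (hrange x hx y hy t ht))
      exact continuousOn_const.mul (hρcont.comp h1 h2)
  -- interval integrability
  have hsub : ∀ a ∈ Icc (0:ℝ) T, ∀ b ∈ Icc (0:ℝ) T, uIcc a b ⊆ Icc (0:ℝ) T := by
    intro a ha b hb
    rw [← uIcc_of_le hT.le]
    exact uIcc_subset_uIcc (by rwa [uIcc_of_le hT.le]) (by rwa [uIcc_of_le hT.le])
  have hgII : ∀ x ∈ Ω, ∀ a ∈ Icc (0:ℝ) T, ∀ b ∈ Icc (0:ℝ) T,
      IntervalIntegrable (fun s => ∫ y in Ω, K x y * deriv ρ (u x s - u y s)) volume a b :=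
    fun x hx a ha b hb => ((hgcont x hx).mono (hsub a ha b hb)).intervalIntegrable
  -- time Lipschitz
  have htime : ∀ x ∈ Ω, ∀ t ∈ Icc (0:ℝ) T, ∀ s ∈ Icc (0:ℝ) T,
      |u x t - u x s| ≤ C * D * |t - s| := by
    intro x hx t ht s hs
    have h1 : u x t - u x s = ∫ σ in s..t, ∫ y in Ω, K x y * deriv ρ (u x σ - u y σ) := by
      rw [hueq x hx t ht, hueq x hx s hs]
      have h := intervalIntegral.integral_interval_sub_left
        (hgII x hx 0 h0T t ht) (hgII x hx 0 h0T s hs)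
      linarith
    have h2 : ∀ σ ∈ uIoc s t, ‖∫ y in Ω, K x y * deriv ρ (u x σ - u y σ)‖ ≤ C * D := by
      intro σ hσ
      exact hgbd x hx σ (hsub s hs t ht (uIoc_subset_uIcc hσ))
    calc |u x t - u x s| = ‖∫ σ in s..t, ∫ y in Ω, K x y * deriv ρ (u x σ - u y σ)‖ := by
          rw [h1, Real.norm_eq_abs]
      _ ≤ C * D * |t - s| := intervalIntegral.norm_integral_le_of_norm_le_const h2
  -- right derivative
  have hderiv : ∀ x ∈ Ω, ∀ t ∈ Ico (0:ℝ) T,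
      HasDerivWithinAt (fun τ => u x τ)
        (∫ y in Ω, K x y * deriv ρ (u x t - u y t)) (Ici t) t := by
    intro x hx t ht
    have htm : Icc (0:ℝ) T ∈ nhdsWithin t (Ici t) := by
      apply mem_nhdsWithin.2
      exact ⟨Iio T, isOpen_Iio, ht.2, fun τ hτ => ⟨ht.1.trans hτ.2, hτ.1.le⟩⟩
    have htIcc : t ∈ Icc (0:ℝ) T := ⟨ht.1, ht.2.le⟩
    have htm' : Icc (0:ℝ) T ∈ nhdsWithin t (Ioi t) :=
      nhdsWithin_mono t Ioi_subset_Ici_self htm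
    have hmeasg : StronglyMeasurableAtFilter
        (fun s => ∫ y in Ω, K x y * deriv ρ (u x s - u y s)) (nhdsWithin t (Ioi t)) volume :=
      ⟨Icc 0 T, htm', (hgcont x hx).aestronglyMeasurable measurableSet_Icc⟩
    have hcontg : ContinuousWithinAt
        (fun s => ∫ y in Ω, K x y * deriv ρ (u x s - u y s)) (Ioi t) t :=
      (((hgcont x hx) t htIcc).mono_of_mem_nhdsWithin htm).mono Ioi_subset_Ici_self
    have hFTC := intervalIntegral.integral_hasDerivWithinAt_right (s := Ici t) (t := Ioi t)
      (hgII x hx 0 h0T t htIcc) hmeasg hcontg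
    have hF := hFTC.const_add (u₀ x)
    apply hF.congr_of_eventuallyEq ?_ (hueq x hx t htIcc)
    exact Filter.eventually_of_mem htm (fun τ hτ => hueq x hx τ hτ)
  -- difference of nonlocalities
  have hgdiff : ∀ x ∈ Ω, ∀ x' ∈ Ω, ∀ t ∈ Icc (0:ℝ) T,
      |(∫ y in Ω, K x y * deriv ρ (u x t - u y t))
        - ∫ y in Ω, K x' y * deriv ρ (u x' t - u y t)|
      ≤ Lρ * D * |u x t - u x' t| + C * LK * dist x x' := by
    intro x hx x' hx' t ht
    have hf1 := hint1 x hx x hx t ht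
    have hf2 := hint1 x' hx' x' hx' t ht
    have hf3 := hint1 x' hx' x hx t ht
    have hp1 : Integrable (fun y => (K x y - K x' y) * deriv ρ (u x t - u y t))
        (volume.restrict Ω) :=
      (hf1.sub hf3).congr (Filter.Eventually.of_forall fun y => by simp only [Pi.sub_apply]; ring)
    have hp2 : Integrable
        (fun y => K x' y * (deriv ρ (u x t - u y t) - deriv ρ (u x' t - u y t)))
        (volume.restrict Ω) :=
      (hf3.sub hf2).congr (Filter.Eventually.of_forall fun y => by simp only [Pi.sub_apply]; ring)
    have hsplit : (∫ y in Ω, K x y * deriv ρ (u x t - u y t))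
        - (∫ y in Ω, K x' y * deriv ρ (u x' t - u y t))
        = (∫ y in Ω, (K x y - K x' y) * deriv ρ (u x t - u y t))
          + ∫ y in Ω, K x' y * (deriv ρ (u x t - u y t) - deriv ρ (u x' t - u y t)) := by
      rw [← integral_add hp1 hp2, ← integral_sub hf1 hf2]
      exact integral_congr_ae (Filter.Eventually.of_forall fun y => by simp only [Pi.sub_apply]; ring)
    have hb1 : |∫ y in Ω, (K x y - K x' y) * deriv ρ (u x t - u y t)| ≤ C * (LK * dist x x') := by
      have h1 : ‖∫ y in Ω, (K x y - K x' y) * deriv ρ (u x t - u y t)‖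
          ≤ ∫ y in Ω, ‖(K x y - K x' y) * deriv ρ (u x t - u y t)‖ :=
        norm_integral_le_integral_norm _
      have h2 : (∫ y in Ω, ‖(K x y - K x' y) * deriv ρ (u x t - u y t)‖)
          ≤ ∫ y in Ω, C * |K x y - K x' y| := by
        apply integral_mono_of_nonneg (Filter.Eventually.of_forall fun y => norm_nonneg _)
          (((hKint x hx).sub (hKint x' hx')).abs.const_mul C)
        filter_upwards [haeΩ] with y hy
        have hρb := hC _ (hrange x hx y hy t ht)
        calc ‖(K x y - K x' y) * deriv ρ (u x t - u y t)‖
            = |K x y - K x' y| * |deriv ρ (u x t - u y t)| := by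
              rw [Real.norm_eq_abs, abs_mul]
          _ ≤ |K x y - K x' y| * C := mul_le_mul_of_nonneg_left hρb (abs_nonneg _)
          _ = C * |K x y - K x' y| := mul_comm _ _
      have h3 : (∫ y in Ω, C * |K x y - K x' y|) = C * ∫ y in Ω, |K x y - K x' y| :=
        integral_const_mul _ _
      have h4 : C * (∫ y in Ω, |K x y - K x' y|) ≤ C * (LK * dist x x') :=
        mul_le_mul_of_nonneg_left (hKlip' x hx x' hx') hC0
      rw [← Real.norm_eq_abs]
      linarith
    have hb2 : |∫ y in Ω, K x' y * (deriv ρ (u x t - u y t) - deriv ρ (u x' t - u y t))|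
        ≤ D * (Lρ * |u x t - u x' t|) := by
      have h1 : ‖∫ y in Ω, K x' y * (deriv ρ (u x t - u y t) - deriv ρ (u x' t - u y t))‖
          ≤ ∫ y in Ω, ‖K x' y * (deriv ρ (u x t - u y t) - deriv ρ (u x' t - u y t))‖ :=
        norm_integral_le_integral_norm _
      have h2 : (∫ y in Ω, ‖K x' y * (deriv ρ (u x t - u y t) - deriv ρ (u x' t - u y t))‖)
          ≤ ∫ y in Ω, K x' y * (Lρ * |u x t - u x' t|) := by
        apply integral_mono_of_nonneg (Filter.Eventually.of_forall fun y => norm_nonneg _)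
          ((hKint x' hx').mul_const _)
        filter_upwards [haeΩ] with y hy
        have hρd : |deriv ρ (u x t - u y t) - deriv ρ (u x' t - u y t)|
            ≤ Lρ * |u x t - u x' t| := by
          have h := hρlip (u x t - u y t) (u x' t - u y t)
            (hrange x hx y hy t ht) (hrange x' hx' y hy t ht)
          have he : u x t - u y t - (u x' t - u y t) = u x t - u x' t := by ring
          rwa [he] at h
        calc ‖K x' y * (deriv ρ (u x t - u y t) - deriv ρ (u x' t - u y t))‖
            = K x' y * |deriv ρ (u x t - u y t) - deriv ρ (u x' t - u y t)| := by
              rw [Real.norm_eq_abs, abs_mul, abs_of_nonneg (hKnonneg x' y)]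
          _ ≤ K x' y * (Lρ * |u x t - u x' t|) :=
              mul_le_mul_of_nonneg_left hρd (hKnonneg x' y)
      have h3 : (∫ y in Ω, K x' y * (Lρ * |u x t - u x' t|))
          = (∫ y in Ω, K x' y) * (Lρ * |u x t - u x' t|) := integral_mul_const _ _
      have h4 : (∫ y in Ω, K x' y) * (Lρ * |u x t - u x' t|)
          ≤ D * (Lρ * |u x t - u x' t|) :=
        mul_le_mul_of_nonneg_right (hD x' hx')
          (mul_nonneg hLρ0 (abs_nonneg _))
      rw [← Real.norm_eq_abs]
      linarith
    rw [hsplit]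
    have habs := abs_add_le (∫ y in Ω, (K x y - K x' y) * deriv ρ (u x t - u y t))
      (∫ y in Ω, K x' y * (deriv ρ (u x t - u y t) - deriv ρ (u x' t - u y t)))
    nlinarith [hb1, hb2, habs]
  -- auxiliary exponential inequality
  have exp_aux : ∀ a : ℝ, 0 ≤ a → Real.exp a - 1 ≤ a * Real.exp a := by
    intro a ha
    have h1 : (1 - a) * Real.exp a ≤ Real.exp (-a) * Real.exp a :=
      mul_le_mul_of_nonneg_right (by linarith [Real.add_one_le_exp (-a)]) (Real.exp_pos a).le
    rw [← Real.exp_add] at h1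
    simp only [neg_add_cancel, Real.exp_zero] at h1
    nlinarith [h1]
  -- Gronwall constants
  set Kc : ℝ := Lρ * D + 1 with hKcdef
  have hKc : 0 < Kc := by
    have := mul_nonneg hLρ0 hD0
    rw [hKcdef]; linarith
  set E : ℝ := Real.exp (Kc * T) with hEdef
  have hE1 : (1:ℝ) ≤ E := by
    rw [hEdef]
    exact Real.one_le_exp (mul_nonneg hKc.le hT.le)
  set Lsp : ℝ := (L₀' + C * LK * T) * E with hLspdef
  have hLsp0 : 0 ≤ Lsp := by
    have h1 : 0 ≤ C * LK * T := mul_nonneg (mul_nonneg hC0 hLK0) hT.le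
    rw [hLspdef]
    exact mul_nonneg (by linarith) (by linarith)
  clear_value Kc E Lsp
  -- spatial Lipschitz via Gronwall
  have hspace : ∀ x ∈ Ω, ∀ x' ∈ Ω, ∀ t ∈ Icc (0:ℝ) T,
      |u x t - u x' t| ≤ Lsp * dist x x' := by
    intro x hx x' hx' t ht
    have hd0 : 0 ≤ dist x x' := dist_nonneg
    have key := norm_le_gronwallBound_of_norm_deriv_right_le
      (f := fun τ => u x τ - u x' τ)
      (f' := fun τ => (∫ y in Ω, K x y * deriv ρ (u x τ - u y τ))
        - ∫ y in Ω, K x' y * deriv ρ (u x' τ - u y τ))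
      (δ := L₀' * dist x x') (K := Kc) (ε := C * LK * dist x x') (a := 0) (b := T)
      ((hcu x hx).sub (hcu x' hx'))
      (fun τ hτ => (hderiv x hx τ hτ).sub (hderiv x' hx' τ hτ))
      (by
        have h00 : u x 0 = u₀ x := by
          rw [hueq x hx 0 h0T, intervalIntegral.integral_same]; ring
        have h00' : u x' 0 = u₀ x' := by
          rw [hueq x' hx' 0 h0T, intervalIntegral.integral_same]; ring
        show ‖u x 0 - u x' 0‖ ≤ L₀' * dist x x'
        rw [Real.norm_eq_abs, h00, h00']
        exact hu₀lip' x hx x' hx')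
      (by
        intro τ hτ
        have h1 := hgdiff x hx x' hx' τ ⟨hτ.1, hτ.2.le⟩
        show ‖(∫ y in Ω, K x y * deriv ρ (u x τ - u y τ))
          - ∫ y in Ω, K x' y * deriv ρ (u x' τ - u y τ)‖
          ≤ Kc * ‖u x τ - u x' τ‖ + C * LK * dist x x'
        rw [Real.norm_eq_abs, Real.norm_eq_abs]
        have h2 : 0 ≤ |u x τ - u x' τ| := abs_nonneg _
        rw [hKcdef]
        linarith [h1, h2])
      t ht
    have hKcne : Kc ≠ 0 := ne_of_gt hKc
    rw [gronwallBound_of_K_ne_0 hKcne] at key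
    simp only [sub_zero] at key
    have hexp_le : Real.exp (Kc * t) ≤ E := by
      rw [hEdef]
      exact Real.exp_le_exp.mpr (mul_le_mul_of_nonneg_left ht.2 hKc.le)
    have hexp1 : Real.exp (Kc * t) - 1 ≤ Kc * t * Real.exp (Kc * t) :=
      exp_aux _ (mul_nonneg hKc.le ht.1)
    have hεd0 : 0 ≤ C * LK * dist x x' := mul_nonneg (mul_nonneg hC0 hLK0) hd0
    have h5 : C * LK * dist x x' / Kc * (Real.exp (Kc * t) - 1)
        ≤ C * LK * dist x x' / Kc * (Kc * t * Real.exp (Kc * t)) :=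
      mul_le_mul_of_nonneg_left hexp1 (div_nonneg hεd0 hKc.le)
    have h6 : C * LK * dist x x' / Kc * (Kc * t * Real.exp (Kc * t))
        = C * LK * dist x x' * t * Real.exp (Kc * t) := by
      field_simp
    have h7 : C * LK * dist x x' * t * Real.exp (Kc * t) ≤ C * LK * dist x x' * T * E := by
      apply mul_le_mul (mul_le_mul_of_nonneg_left ht.2 hεd0) hexp_le (Real.exp_pos _).le
      exact mul_nonneg hεd0 hT.le
    have h8 : L₀' * dist x x' * Real.exp (Kc * t) ≤ L₀' * dist x x' * E :=
      mul_le_mul_of_nonneg_left hexp_le (mul_nonneg hL₀0 hd0)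
    simp only [Real.norm_eq_abs] at key
    rw [hLspdef]
    rw [h6] at h5
    linarith [key, h5, h7, h8]
  -- conclusion
  refine ⟨Lsp + C * D, ?_⟩
  intro x hx y hy t ht s hs
  have h1 := htime x hx t ht s hs
  have h2 := hspace x hx y hy s hs
  have h3 : |u x t - u y s| ≤ |u x t - u x s| + |u x s - u y s| :=
    abs_sub_le (u x t) (u x s) (u y s)
  have hCD0 : 0 ≤ C * D := mul_nonneg hC0 hD0
  have hts0 : 0 ≤ |t - s| := abs_nonneg _
  have hd0 : 0 ≤ dist x y := dist_nonneg
  nlinarith [h1, h2, h3, mul_nonneg hLsp0 hts0, mul_nonneg hCD0 hd0]
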